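/- Let α ∈ (0,1), 0 < a < 1, and let v : [a,1] → ℝ be a C¹ function with v(a) = v(1) = 0. Then ∫_a^1 x^(α-2) v(x)² dx ≤ (4/(1-α)²) ∫_a^1 x^α (v'(x))² dx. -/

import Mathlib

open MeasureTheory intervalIntegral

theorem hardy_interval_away_from_zero (α a : ℝ) (hα : α ∈ Set.Ioo (0:ℝ) 1)
    (ha : 0 < a) (ha1 : a < 1)
    (v : ℝ → ℝ) (hv : ContDiff ℝ 1 v) (hva : v a = 0) (hv1 : v 1 = 0) :
    ∫ x in a..1, x ^ (α - 2) * (v x) ^ 2 ≤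
      (4 / (1 - α) ^ 2) * ∫ x in a..1, x ^ α * (deriv v x) ^ 2 := by
  have h1α : 0 < 1 - α := by linarith [hα.2]
  have hale : a ≤ (1:ℝ) := ha1.le
  have huIcc : Set.uIcc a 1 = Set.Icc a 1 := Set.uIcc_of_le hale
  have hpos : ∀ x ∈ Set.uIcc a 1, 0 < x := by
    intro x hx; rw [huIcc] at hx; exact lt_of_lt_of_le ha hx.1
  have hvd : Differentiable ℝ v := hv.differentiable one_ne_zero
  have hv'c : Continuous (deriv v) := hv.continuous_deriv le_rfl
  have hrc : ∀ p : ℝ, ContinuousOn (fun x : ℝ => x ^ p) (Set.uIcc a 1) := by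
    intro p x hx
    exact (Real.continuousAt_rpow_const x p (Or.inl (hpos x hx).ne')).continuousWithinAt
  have hi1 : IntervalIntegrable (fun x => x ^ (α - 2) * v x ^ 2) volume a 1 :=
    ((hrc _).mul ((hvd.continuous.pow 2).continuousOn)).intervalIntegrable
  have hi2 : IntervalIntegrable (fun x => x ^ (α - 1) * (v x * deriv v x)) volume a 1 :=
    ((hrc _).mul ((hvd.continuous.mul hv'c).continuousOn)).intervalIntegrable
  have hi3 : IntervalIntegrable (fun x => x ^ α * deriv v x ^ 2) volume a 1 :=
    ((hrc _).mul ((hv'c.pow 2).continuousOn)).intervalIntegrable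
  have hF : ∀ x ∈ Set.uIcc a 1,
      HasDerivAt (fun x => x ^ (α - 1) * v x ^ 2)
        ((α - 1) * (x ^ (α - 2) * v x ^ 2) + 2 * (x ^ (α - 1) * (v x * deriv v x))) x := by
    intro x hx
    have hx0 := hpos x hx
    have h1 : HasDerivAt (fun x : ℝ => x ^ (α - 1)) ((α - 1) * x ^ (α - 1 - 1)) x :=
      Real.hasDerivAt_rpow_const (Or.inl hx0.ne')
    have h2 : HasDerivAt (fun x => v x ^ 2) (2 * v x * deriv v x) x := by
      have := ((hvd x).hasDerivAt).pow 2
      simp at this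
      exact this
    have h3 := h1.fun_mul h2
    have he : α - 1 - 1 = α - 2 := by ring
    rw [he] at h3
    refine h3.congr_deriv ?_
    ring
  have hint : IntervalIntegrable (fun x =>
      (α - 1) * (x ^ (α - 2) * v x ^ 2) + 2 * (x ^ (α - 1) * (v x * deriv v x))) volume a 1 :=
    (hi1.const_mul _).add (hi2.const_mul _)
  have hkey : ∫ x in a..1,
      ((α - 1) * (x ^ (α - 2) * v x ^ 2) + 2 * (x ^ (α - 1) * (v x * deriv v x))) = 0 := by
    rw [intervalIntegral.integral_eq_sub_of_hasDerivAt hF hint]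
    simp [hva, hv1]
  rw [intervalIntegral.integral_add (hi1.const_mul _) (hi2.const_mul _),
    intervalIntegral.integral_const_mul, intervalIntegral.integral_const_mul] at hkey
  set I := ∫ x in a..1, x ^ (α - 2) * v x ^ 2 with hI
  set K := ∫ x in a..1, x ^ (α - 1) * (v x * deriv v x) with hK
  set J := ∫ x in a..1, x ^ α * deriv v x ^ 2 with hJ
  have hpt : ∀ x ∈ Set.Icc a 1,
      2 * (x ^ (α - 1) * (v x * deriv v x)) ≤
        (1 - α) / 2 * (x ^ (α - 2) * v x ^ 2) + 2 / (1 - α) * (x ^ α * deriv v x ^ 2) := by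
    intro x hx
    have hx0 : 0 < x := lt_of_lt_of_le ha hx.1
    set A := x ^ ((α - 2) / 2) * v x with hA
    set B := x ^ (α / 2) * deriv v x with hB
    have e1 : x ^ (α - 2) * v x ^ 2 = A ^ 2 := by
      rw [hA, mul_pow, ← Real.rpow_natCast (x ^ ((α - 2)/2)) 2, ← Real.rpow_mul hx0.le]
      norm_num
    have e2 : x ^ α * deriv v x ^ 2 = B ^ 2 := by
      rw [hB, mul_pow, ← Real.rpow_natCast (x ^ (α/2)) 2, ← Real.rpow_mul hx0.le]
      norm_num
    have e3 : x ^ (α - 1) * (v x * deriv v x) = A * B := by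
      rw [hA, hB]
      rw [show (α : ℝ) - 1 = (α - 2) / 2 + α / 2 by ring, Real.rpow_add hx0]
      ring
    rw [e1, e2, e3]
    have h2 : 2 / (1 - α) * B ^ 2 = 2 * B ^ 2 / (1 - α) := by ring
    rw [h2, ← sub_le_iff_le_add', le_div_iff₀ h1α]
    nlinarith [sq_nonneg ((1 - α) * A - 2 * B)]
  have hmono : 2 * K ≤ (1 - α) / 2 * I + 2 / (1 - α) * J := by
    have := intervalIntegral.integral_mono_on hale (hi2.const_mul 2)
      ((hi1.const_mul _).add (hi3.const_mul _)) hpt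
    rwa [intervalIntegral.integral_const_mul,
      intervalIntegral.integral_add (hi1.const_mul _) (hi3.const_mul _),
      intervalIntegral.integral_const_mul, intervalIntegral.integral_const_mul] at this
  have h2K : 2 * K = (1 - α) * I := by linarith
  have hstep : (1 - α) / 2 * I ≤ 2 / (1 - α) * J := by linarith
  have hstep2 := mul_le_mul_of_nonneg_left hstep h1α.le
  have hd : (1 - α) * (2 / (1 - α)) = 2 := by field_simp
  rw [← mul_assoc, ← mul_assoc, hd] at hstep2
  rw [div_mul_eq_mul_div, le_div_iff₀ (pow_pos h1α 2)]
  nlinarith [hstep2]
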